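/- softmax satisfies: if z_i ≤ z_j then 0 ≤ softmax_j(z) − softmax_i(z) ≤ (z_j − z_i)/2. -/

import Mathlib

noncomputable def softmax {K : ℕ} (z : Fin K → ℝ) (i : Fin K) : ℝ :=
  Real.exp (z i) / ∑ k, Real.exp (z k)

lemma exp_sub_one_le (t : ℝ) (ht : 0 ≤ t) :
    Real.exp t - 1 ≤ t * (1 + Real.exp t) / 2 := by
  rcases eq_or_lt_of_le ht with h | h
  · simp [← h]
  set c : ℝ := (Real.exp t - 1) / t with hc
  have key : ∫ s in (0:ℝ)..t, Real.exp s ≤ ∫ s in (0:ℝ)..t, (1 + s * c) := by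
    apply intervalIntegral.integral_mono_on h.le
    · exact Real.continuous_exp.intervalIntegrable 0 t
    · exact (Continuous.intervalIntegrable (by continuity) 0 t)
    · intro s hs
      rw [Set.mem_Icc] at hs
      have h1 : Real.exp s = Real.exp ((1 - s/t) * 0 + (s/t) * t) := by
        rw [mul_zero, zero_add, div_mul_cancel₀ s h.ne']
      rw [h1]
      have := convexOn_exp.2 (Set.mem_univ (0:ℝ)) (Set.mem_univ t)
        (show (0:ℝ) ≤ 1 - s/t by have := div_le_one_of_le₀ hs.2 h.le; linarith)
        (div_nonneg hs.1 h.le) (show (1 - s/t) + s/t = 1 by ring)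
      simp only [smul_eq_mul, Real.exp_zero, mul_one] at this
      calc Real.exp ((1 - s/t) * 0 + s/t * t) ≤ (1 - s/t) + s/t * Real.exp t := this
        _ = 1 + s * c := by rw [hc]; field_simp; ring
  have hL : ∫ s in (0:ℝ)..t, Real.exp s = Real.exp t - 1 := by
    simp [integral_exp]
  have hR : ∫ s in (0:ℝ)..t, (1 + s * c) = t + t^2/2 * c := by
    rw [intervalIntegral.integral_add (intervalIntegrable_const)
      ((Continuous.intervalIntegrable (by continuity) 0 t))]
    simp [intervalIntegral.integral_mul_const, integral_id]
  rw [hL, hR] at key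
  have : t + t^2/2 * c = t * (1 + Real.exp t) / 2 := by
    rw [hc]; field_simp; ring
  linarith [key, this ▸ key]

lemma exp_sub_exp_le (a b : ℝ) (hab : a ≤ b) :
    Real.exp b - Real.exp a ≤ (b - a) * (Real.exp a + Real.exp b) / 2 := by
  have h := exp_sub_one_le (b - a) (by linarith)
  have h2 : Real.exp a * (Real.exp (b-a) - 1) ≤
      Real.exp a * ((b-a) * (1 + Real.exp (b-a)) / 2) := by
    exact mul_le_mul_of_nonneg_left h (Real.exp_nonneg a)
  rw [mul_sub, mul_one, ← Real.exp_add] at h2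
  have hba : a + (b - a) = b := by ring
  rw [hba] at h2
  calc Real.exp b - Real.exp a ≤ Real.exp a * ((b-a) * (1 + Real.exp (b-a)) / 2) := h2
    _ = (b - a) * (Real.exp a + Real.exp a * Real.exp (b-a)) / 2 := by ring
    _ = (b - a) * (Real.exp a + Real.exp b) / 2 := by rw [← Real.exp_add, hba]

theorem stmt9 {K : ℕ} (z : Fin K → ℝ) (i j : Fin K) (hij : z i ≤ z j) :
    0 ≤ softmax z j - softmax z i ∧
    softmax z j - softmax z i ≤ (z j - z i) / 2 := by
  have hS : 0 < ∑ k, Real.exp (z k) := by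
    apply Finset.sum_pos (fun k _ => Real.exp_pos _)
    exact ⟨i, Finset.mem_univ i⟩
  have hdiff : softmax z j - softmax z i
      = (Real.exp (z j) - Real.exp (z i)) / ∑ k, Real.exp (z k) := by
    unfold softmax; rw [div_sub_div_same]
  have hnum : 0 ≤ Real.exp (z j) - Real.exp (z i) := by
    have := Real.exp_le_exp.2 hij; linarith
  constructor
  · rw [hdiff]; positivity
  · rcases eq_or_ne i j with rfl | hne
    · simp
    · have hsum2 : Real.exp (z i) + Real.exp (z j) ≤ ∑ k, Real.exp (z k) := by
        have : ∑ k ∈ ({i, j} : Finset (Fin K)), Real.exp (z k) ≤ ∑ k, Real.exp (z k) :=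
          Finset.sum_le_sum_of_subset_of_nonneg (Finset.subset_univ _)
            (fun k _ _ => (Real.exp_pos _).le)
        rwa [Finset.sum_pair hne] at this
      have hpos2 : 0 < Real.exp (z i) + Real.exp (z j) := by positivity
      rw [hdiff]
      calc (Real.exp (z j) - Real.exp (z i)) / ∑ k, Real.exp (z k)
          ≤ (Real.exp (z j) - Real.exp (z i)) / (Real.exp (z i) + Real.exp (z j)) :=
            div_le_div_of_nonneg_left hnum hpos2 hsum2
        _ ≤ (z j - z i) / 2 := by
            rw [div_le_div_iff₀ hpos2 (by norm_num : (0:ℝ) < 2)]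
            have := exp_sub_exp_le (z i) (z j) hij
            nlinarith
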